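/- Let N ∈ ℕ with N ≥ 1. There exists a constant C > 0 depending only on N such that for all probability distributions f and g on ℕ with the same mean value and with supp(f) ∪ supp(g) ⊆ {0, 1, ..., N}, one has W_1(f,g) ≤ C · D_2(f,g). -/

import Mathlib

open scoped ENNReal

noncomputable section

/-- `f` is a probability distribution on `ℕ`. -/
def IsProbN (f : ℕ → ℝ) : Prop := (∀ n, 0 ≤ f n) ∧ HasSum f 1

/-- `π` is a coupling of the probability distributions `f` and `g` on `ℕ`. -/
def IsCouplingN (π : ℕ → ℕ → ℝ) (f g : ℕ → ℝ) : Prop :=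
  (∀ i j, 0 ≤ π i j) ∧ (∀ i, HasSum (fun j => π i j) (f i)) ∧
    (∀ j, HasSum (fun i => π i j) (g j))

/-- The Wasserstein distance of order `p` between probability distributions on `ℕ`. -/
def WassersteinN (p : ℝ) (f g : ℕ → ℝ) : ℝ≥0∞ :=
  (⨅ π : {π : ℕ → ℕ → ℝ // IsCouplingN π f g},
    ∑' (i : ℕ) (j : ℕ), ENNReal.ofReal (π.1 i j) * ENNReal.ofReal (|(i : ℝ) - (j : ℝ)| ^ p)) ^ (1 / p)

/-- The probability generating function of `f`. -/
def pgfN (f : ℕ → ℝ) (z : ℝ) : ℝ := ∑' n : ℕ, z ^ n * f n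

/-- The Toscani (Fourier-based) distance of order `s` between probability
distributions on `ℕ`. -/
def ToscaniN (s : ℝ) (f g : ℕ → ℝ) : ℝ≥0∞ :=
  ⨆ z : Set.Ioo (0 : ℝ) 1, ENNReal.ofReal (|pgfN f z - pgfN g z| / (1 - (z : ℝ)) ^ s)


-- auxiliary: Wasserstein_1 is at most the cost of any given coupling
lemma W1_le_cost (f g : ℕ → ℝ) (π : ℕ → ℕ → ℝ) (hπ : IsCouplingN π f g) :
    WassersteinN 1 f g ≤
      ∑' (i : ℕ) (j : ℕ), ENNReal.ofReal (π i j) * ENNReal.ofReal (|(i : ℝ) - (j : ℝ)| ^ (1:ℝ)) := by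
  unfold WassersteinN
  rw [show (1:ℝ)/1 = 1 by norm_num, ENNReal.rpow_one]
  exact iInf_le (fun π : {π : ℕ → ℕ → ℝ // IsCouplingN π f g} =>
    ∑' (i : ℕ) (j : ℕ), ENNReal.ofReal (π.1 i j) * ENNReal.ofReal (|(i : ℝ) - (j : ℝ)| ^ (1:ℝ)))
    ⟨π, hπ⟩

lemma vandermonde_bound (N : ℕ) : ∃ L > (0:ℝ), ∀ (μ : ℕ → ℝ) (t : ℝ), 0 ≤ t →
    (∀ z : ℝ, z ∈ Set.Ioo (0:ℝ) 1 → |∑ n ∈ Finset.range (N+1), z ^ n * μ n| ≤ t) →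
    ∀ n ∈ Finset.range (N+1), |μ n| ≤ L * t := by
  set x : Fin (N+1) → ℝ := fun k => ((k:ℝ)+1)/((N:ℝ)+2) with hx
  have hxmem : ∀ k, x k ∈ Set.Ioo (0:ℝ) 1 := by
    intro k
    constructor
    · positivity
    · rw [div_lt_one (by positivity)]
      have : (k:ℝ) ≤ N := by exact_mod_cast Nat.le_of_lt_succ k.isLt
      linarith
  have hxinj : Function.Injective x := by
    intro a b hab
    simp only [hx, div_left_inj' (by positivity : ((N:ℝ)+2) ≠ 0), add_left_inj, Nat.cast_inj] at hab
    exact Fin.ext (by exact_mod_cast hab)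
  set V := Matrix.vandermonde x with hV
  have hdet : IsUnit V.det := by
    rw [isUnit_iff_ne_zero, hV, Matrix.det_vandermonde_ne_zero_iff]
    exact hxinj
  set W := V⁻¹ with hW
  refine ⟨(∑ n : Fin (N+1), ∑ k : Fin (N+1), |W n k|) + 1, by positivity, ?_⟩
  intro μ t ht hbd n hn
  set u : Fin (N+1) → ℝ := fun n => μ n with hu
  have key : W.mulVec (V.mulVec u) = u := by
    rw [Matrix.mulVec_mulVec, Matrix.nonsing_inv_mul V hdet, Matrix.one_mulVec]
  have hvk : ∀ k : Fin (N+1), |(V.mulVec u) k| ≤ t := by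
    intro k
    have : (V.mulVec u) k = ∑ j ∈ Finset.range (N+1), x k ^ j * μ j := by
      rw [Matrix.mulVec, dotProduct]
      rw [← Fin.sum_univ_eq_sum_range (fun j => x k ^ j * μ j)]
      rfl
    rw [this]
    exact hbd _ (hxmem k)
  set n' : Fin (N+1) := ⟨n, Finset.mem_range.mp hn⟩ with hn'
  have : μ n = (W.mulVec (V.mulVec u)) n' := by rw [key]
  rw [this]
  calc |(W.mulVec (V.mulVec u)) n'| ≤ ∑ k, |W n' k| * |(V.mulVec u) k| := by
        rw [Matrix.mulVec, dotProduct]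
        refine (Finset.abs_sum_le_sum_abs _ _).trans ?_
        refine Finset.sum_le_sum fun k _ => ?_
        rw [abs_mul]
    _ ≤ ∑ k, |W n' k| * t := by
        refine Finset.sum_le_sum fun k _ => ?_
        exact mul_le_mul_of_nonneg_left (hvk k) (abs_nonneg _)
    _ = (∑ k, |W n' k|) * t := by rw [Finset.sum_mul]
    _ ≤ ((∑ n : Fin (N+1), ∑ k : Fin (N+1), |W n k|) + 1) * t := by
        refine mul_le_mul_of_nonneg_right ?_ ht
        have h1 : (∑ k, |W n' k|) ≤ ∑ n : Fin (N+1), ∑ k : Fin (N+1), |W n k| :=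
          Finset.single_le_sum (f := fun n => ∑ k, |W n k|)
            (fun i _ => Finset.sum_nonneg fun k _ => abs_nonneg _) (Finset.mem_univ n')
        linarith

/-- For `N ≥ 1`, there exists a constant `C > 0` depending only on `N`
such that for all probability distributions `f, g` on `ℕ` with the same mean value and
support contained in `{0, 1, …, N}`, one has `W₁(f,g) ≤ C · D₂(f,g)`. -/
theorem wasserstein_one_le_toscani_two (N : ℕ) (hN : 1 ≤ N) :
    ∃ C > (0 : ℝ), ∀ f g : ℕ → ℝ, IsProbN f → IsProbN g →
      (∀ n : ℕ, N < n → f n = 0) → (∀ n : ℕ, N < n → g n = 0) →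
      (∑' n : ℕ, (n : ℝ) * f n = ∑' n : ℕ, (n : ℝ) * g n) →
      WassersteinN 1 f g ≤ ENNReal.ofReal C * ToscaniN 2 f g := by
  obtain ⟨L, hL, hLbd⟩ := vandermonde_bound N
  have hN1 : (1:ℝ) ≤ (N:ℝ) := by exact_mod_cast hN
  have hNpos : (0:ℝ) < N := by linarith
  refine ⟨(N:ℝ) * ((N:ℝ)+1) * L, mul_pos (mul_pos hNpos (by linarith)) hL, ?_⟩
  intro f g hf hg hfN hgN _hmean
  set C := (N:ℝ) * ((N:ℝ)+1) * L with hC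
  have hC0 : 0 < C := mul_pos (mul_pos hNpos (by linarith)) hL
  -- dispatch the case where Toscani distance is infinite
  rcases eq_or_ne (ToscaniN 2 f g) ⊤ with hT | hT
  · rw [hT, ENNReal.mul_top (ne_of_gt (ENNReal.ofReal_pos.mpr hC0))]
    exact le_top
  set t := (ToscaniN 2 f g).toReal with htdef
  have ht0 : 0 ≤ t := ENNReal.toReal_nonneg
  have hTt : ToscaniN 2 f g = ENNReal.ofReal t := (ENNReal.ofReal_toReal hT).symm
  -- pgfs as finite sums
  have hout : ∀ (h : ℕ → ℝ), (∀ n, N < n → h n = 0) → ∀ n, n ∉ Finset.range (N+1) → h n = 0 := by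
    intro h hh n hn
    exact hh n (by simp [Finset.mem_range] at hn; omega)
  have hpgf : ∀ (h : ℕ → ℝ), (∀ n, N < n → h n = 0) → ∀ z : ℝ,
      pgfN h z = ∑ n ∈ Finset.range (N+1), z ^ n * h n := by
    intro h hh z
    exact tsum_eq_sum (fun n hn => by rw [hout h hh n hn, mul_zero])
  -- bound on values of the difference polynomial
  have hpz : ∀ z : ℝ, z ∈ Set.Ioo (0:ℝ) 1 →
      |∑ n ∈ Finset.range (N+1), z ^ n * (f n - g n)| ≤ t := by
    intro z hz
    have hzd : pgfN f z - pgfN g z = ∑ n ∈ Finset.range (N+1), z ^ n * (f n - g n) := by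
      rw [hpgf f hfN z, hpgf g hgN z, ← Finset.sum_sub_distrib]
      exact Finset.sum_congr rfl fun n _ => (mul_sub _ _ _).symm
    have hz1 : 0 < 1 - z := by linarith [hz.2]
    have hr1 : (0:ℝ) < (1 - z) ^ (2:ℝ) := Real.rpow_pos_of_pos hz1 2
    have hr2 : (1 - z) ^ (2:ℝ) ≤ 1 :=
      Real.rpow_le_one (le_of_lt hz1) (by linarith [hz.1]) (by norm_num)
    have h1 : |pgfN f z - pgfN g z| ≤ |pgfN f z - pgfN g z| / (1 - z) ^ (2:ℝ) := by
      rw [le_div_iff₀ hr1]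
      calc |pgfN f z - pgfN g z| * (1 - z) ^ (2:ℝ) ≤ |pgfN f z - pgfN g z| * 1 :=
            mul_le_mul_of_nonneg_left hr2 (abs_nonneg _)
        _ = _ := mul_one _
    have h2 : ENNReal.ofReal (|pgfN f z - pgfN g z| / (1 - z) ^ (2:ℝ)) ≤ ToscaniN 2 f g :=
      le_iSup (fun w : Set.Ioo (0:ℝ) 1 =>
        ENNReal.ofReal (|pgfN f w - pgfN g w| / (1 - (w:ℝ)) ^ (2:ℝ))) ⟨z, hz⟩
    have h3 : ENNReal.ofReal (|pgfN f z - pgfN g z|) ≤ ENNReal.ofReal t := by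
      calc ENNReal.ofReal (|pgfN f z - pgfN g z|) ≤
            ENNReal.ofReal (|pgfN f z - pgfN g z| / (1 - z) ^ (2:ℝ)) :=
              ENNReal.ofReal_le_ofReal h1
        _ ≤ ToscaniN 2 f g := h2
        _ = ENNReal.ofReal t := hTt
    rw [← hzd]
    exact (ENNReal.ofReal_le_ofReal_iff ht0).mp h3
  have hμ : ∀ n ∈ Finset.range (N+1), |f n - g n| ≤ L * t :=
    hLbd (fun n => f n - g n) t ht0 hpz
  -- set up positive/negative parts
  set pos : ℕ → ℝ := fun n => max (f n - g n) 0 with hposdef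
  set neg : ℕ → ℝ := fun n => max (g n - f n) 0 with hnegdef
  set m : ℝ := ∑ n ∈ Finset.range (N+1), pos n with hmdef
  have hpos0 : ∀ n, 0 ≤ pos n := fun n => le_max_right _ _
  have hneg0 : ∀ n, 0 ≤ neg n := fun n => le_max_right _ _
  have hposout : ∀ n ∉ Finset.range (N+1), pos n = 0 := by
    intro n hn; simp [hposdef, hout f hfN n hn, hout g hgN n hn]
  have hnegout : ∀ n ∉ Finset.range (N+1), neg n = 0 := by
    intro n hn; simp [hnegdef, hout f hfN n hn, hout g hgN n hn]
  have hfsum : ∑ n ∈ Finset.range (N+1), f n = 1 := by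
    rw [← tsum_eq_sum (L := SummationFilter.unconditional ℕ) (hout f hfN)]; exact hf.2.tsum_eq
  have hgsum : ∑ n ∈ Finset.range (N+1), g n = 1 := by
    rw [← tsum_eq_sum (L := SummationFilter.unconditional ℕ) (hout g hgN)]; exact hg.2.tsum_eq
  have hsub : ∀ n, pos n - neg n = f n - g n := by
    intro n
    rcases le_total (f n) (g n) with h | h
    · rw [hposdef, hnegdef]
      simp only
      rw [max_eq_right (sub_nonpos.mpr h), max_eq_left (sub_nonneg.mpr h)]
      ring
    · rw [hposdef, hnegdef]
      simp only
      rw [max_eq_left (sub_nonneg.mpr h), max_eq_right (sub_nonpos.mpr h)]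
      ring
  have hmn : ∑ n ∈ Finset.range (N+1), neg n = m := by
    have h0 : ∑ n ∈ Finset.range (N+1), (f n - g n) = 0 := by
      rw [Finset.sum_sub_distrib, hfsum, hgsum]; ring
    have h1 : ∑ n ∈ Finset.range (N+1), (pos n - neg n) = 0 := by
      rw [Finset.sum_congr rfl fun n _ => hsub n]; exact h0
    rw [Finset.sum_sub_distrib] at h1
    rw [hmdef]; linarith
  have hm_le : m ≤ ((N:ℝ)+1) * (L * t) := by
    have hposle : ∀ n ∈ Finset.range (N+1), pos n ≤ L * t := by
      intro n hn
      exact max_le ((le_abs_self _).trans (hμ n hn)) (mul_nonneg hL.le ht0)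
    have h2 := Finset.sum_le_sum hposle
    rw [Finset.sum_const, Finset.card_range, nsmul_eq_mul] at h2
    rw [hmdef]
    push_cast at h2 ⊢
    linarith
  rcases eq_or_ne m 0 with hm0 | hm0
  -- degenerate case: f = g, use the diagonal coupling
  · have hfg : f = g := by
      have hpz0 : ∀ n ∈ Finset.range (N+1), pos n = 0 := by
        intro n hn
        exact (Finset.sum_eq_zero_iff_of_nonneg (fun n _ => hpos0 n)).mp (hmdef ▸ hm0) n hn
      have hnz0 : ∀ n ∈ Finset.range (N+1), neg n = 0 := by
        intro n hn
        refine (Finset.sum_eq_zero_iff_of_nonneg (fun n _ => hneg0 n)).mp ?_ n hn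
        rw [hmn]; exact hm0
      funext n
      by_cases hn : n ∈ Finset.range (N+1)
      · have := hsub n
        rw [hpz0 n hn, hnz0 n hn] at this
        linarith
      · rw [hout f hfN n hn, hout g hgN n hn]
    set π : ℕ → ℕ → ℝ := fun i j => if i = j then f i else 0 with hπdef
    have hcp : IsCouplingN π f g := by
      refine ⟨fun i j => ?_, fun i => ?_, fun j => ?_⟩
      · rw [hπdef]; dsimp only; split_ifs; exacts [hf.1 i, le_refl 0]
      · have heq : (fun j => π i j) = (fun j => if j = i then f i else 0) := by
          funext j
          rw [hπdef]; dsimp only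
          by_cases h : i = j
          · subst h; simp
          · rw [if_neg h, if_neg fun hh => h hh.symm]
        rw [heq]; exact hasSum_ite_eq i (f i)
      · have heq : (fun i => π i j) = (fun i => if i = j then g j else 0) := by
          funext i
          rw [hπdef]; dsimp only
          by_cases h : i = j
          · subst h; rw [hfg]
          · rw [if_neg h, if_neg h]
        rw [heq]; exact hasSum_ite_eq j (g j)
    refine le_trans (W1_le_cost f g π hcp) ?_
    have hzero : ∀ i j : ℕ,
        ENNReal.ofReal (π i j) * ENNReal.ofReal (|(i:ℝ) - (j:ℝ)| ^ (1:ℝ)) = 0 := by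
      intro i j
      by_cases h : i = j
      · subst h
        rw [Real.rpow_one, sub_self, abs_zero, ENNReal.ofReal_zero, mul_zero]
      · rw [hπdef]; dsimp only; rw [if_neg h, ENNReal.ofReal_zero, zero_mul]
    simp only [hzero, tsum_zero]
    exact zero_le
  -- main case: positive transported mass
  · have hm : 0 < m := lt_of_le_of_ne (Finset.sum_nonneg fun n _ => hpos0 n) (Ne.symm hm0)
    set π : ℕ → ℕ → ℝ :=
      fun i j => (if i = j then min (f i) (g i) else 0) + pos i * (neg j / m) with hπdef
    have hπnn : ∀ i j, 0 ≤ π i j := by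
      intro i j
      rw [hπdef]; dsimp only
      refine add_nonneg ?_ (mul_nonneg (hpos0 i) (div_nonneg (hneg0 j) hm.le))
      split_ifs
      · exact le_min (hf.1 i) (hg.1 i)
      · exact le_refl 0
    have hcp : IsCouplingN π f g := by
      refine ⟨hπnn, fun i => ?_, fun j => ?_⟩
      · -- row sum is f i
        have h1 : HasSum (fun j => if i = j then min (f i) (g i) else 0) (min (f i) (g i)) := by
          have heq : (fun j => if i = j then min (f i) (g i) else 0)
              = (fun j => if j = i then min (f i) (g i) else 0) := by
            funext j
            by_cases h : i = j
            · subst h; simp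
            · rw [if_neg h, if_neg fun hh => h hh.symm]
          rw [heq]; exact hasSum_ite_eq i _
        have h2 : HasSum (fun j => pos i * (neg j / m)) (pos i) := by
          have hv : ∀ j ∉ Finset.range (N+1), pos i * (neg j / m) = 0 := by
            intro j hj; rw [hnegout j hj, zero_div, mul_zero]
          have h3 := hasSum_sum_of_ne_finset_zero (L := SummationFilter.unconditional ℕ) hv
          have h4 : ∑ j ∈ Finset.range (N+1), pos i * (neg j / m) = pos i := by
            rw [← Finset.mul_sum, ← Finset.sum_div, hmn, div_self hm0, mul_one]
          rwa [h4] at h3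
        have heq : min (f i) (g i) + pos i = f i := by
          rcases le_total (f i) (g i) with h | h
          · rw [min_eq_left h, hposdef]; dsimp only
            rw [max_eq_right (sub_nonpos.mpr h), add_zero]
          · rw [min_eq_right h, hposdef]; dsimp only
            rw [max_eq_left (sub_nonneg.mpr h)]; ring
        have := h1.add h2
        rwa [heq] at this
      · -- column sum is g j
        have h1 : HasSum (fun i => if i = j then min (f i) (g i) else 0) (min (f j) (g j)) := by
          have heq : (fun i => if i = j then min (f i) (g i) else 0)
              = (fun i => if i = j then min (f j) (g j) else 0) := by
            funext i
            by_cases h : i = j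
            · subst h; rfl
            · rw [if_neg h, if_neg h]
          rw [heq]; exact hasSum_ite_eq j _
        have h2 : HasSum (fun i => pos i * (neg j / m)) (neg j) := by
          have hv : ∀ i ∉ Finset.range (N+1), pos i * (neg j / m) = 0 := by
            intro i hi; rw [hposout i hi, zero_mul]
          have h3 := hasSum_sum_of_ne_finset_zero (L := SummationFilter.unconditional ℕ) hv
          have h4 : ∑ i ∈ Finset.range (N+1), pos i * (neg j / m) = neg j := by
            rw [← Finset.sum_mul, ← hmdef, mul_comm, div_mul_cancel₀ _ hm0]
          rwa [h4] at h3
        have heq : min (f j) (g j) + neg j = g j := by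
          rcases le_total (f j) (g j) with h | h
          · rw [min_eq_left h, hnegdef]; dsimp only
            rw [max_eq_left (sub_nonneg.mpr h)]; ring
          · rw [min_eq_right h, hnegdef]; dsimp only
            rw [max_eq_right (sub_nonpos.mpr h), add_zero]
        have := h1.add h2
        rwa [heq] at this
    refine le_trans (W1_le_cost f g π hcp) ?_
    have hπ0 : ∀ i j : ℕ, i ∉ Finset.range (N+1) ∨ j ∉ Finset.range (N+1) → π i j = 0 := by
      intro i j hij
      rw [hπdef]; dsimp only
      rcases hij with hi | hj
      · rw [hposout i hi, zero_mul, add_zero]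
        split_ifs with h
        · rw [hout f hfN i hi, hout g hgN i hi, min_self]
        · rfl
      · rw [hnegout j hj, zero_div, mul_zero, add_zero]
        split_ifs with h
        · rw [h, hout f hfN j hj, hout g hgN j hj, min_self]
        · rfl
    have hterm : ∀ i j : ℕ,
        ENNReal.ofReal (π i j) * ENNReal.ofReal (|(i:ℝ) - (j:ℝ)| ^ (1:ℝ))
          = ENNReal.ofReal (π i j * |(i:ℝ) - (j:ℝ)|) := by
      intro i j
      rw [Real.rpow_one, ← ENNReal.ofReal_mul (hπnn i j)]
    have hinner : ∀ i : ℕ,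
        (∑' j : ℕ, ENNReal.ofReal (π i j) * ENNReal.ofReal (|(i:ℝ) - (j:ℝ)| ^ (1:ℝ)))
          = ∑ j ∈ Finset.range (N+1), ENNReal.ofReal (π i j * |(i:ℝ) - (j:ℝ)|) := by
      intro i
      simp only [hterm]
      exact tsum_eq_sum fun j hj => by rw [hπ0 i j (Or.inr hj), zero_mul, ENNReal.ofReal_zero]
    have houter :
        (∑' (i : ℕ) (j : ℕ),
            ENNReal.ofReal (π i j) * ENNReal.ofReal (|(i:ℝ) - (j:ℝ)| ^ (1:ℝ)))
          = ∑ i ∈ Finset.range (N+1), ∑ j ∈ Finset.range (N+1),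
              ENNReal.ofReal (π i j * |(i:ℝ) - (j:ℝ)|) := by
      simp only [hinner]
      exact tsum_eq_sum fun i hi => Finset.sum_eq_zero fun j _ => by
        rw [hπ0 i j (Or.inl hi), zero_mul, ENNReal.ofReal_zero]
    rw [houter]
    have hsum_eq : ∑ i ∈ Finset.range (N+1), ∑ j ∈ Finset.range (N+1),
        ENNReal.ofReal (π i j * |(i:ℝ) - (j:ℝ)|)
        = ENNReal.ofReal (∑ i ∈ Finset.range (N+1), ∑ j ∈ Finset.range (N+1),
            π i j * |(i:ℝ) - (j:ℝ)|) := by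
      rw [ENNReal.ofReal_sum_of_nonneg fun i _ =>
        Finset.sum_nonneg fun j _ => mul_nonneg (hπnn i j) (abs_nonneg _)]
      exact Finset.sum_congr rfl fun i _ =>
        (ENNReal.ofReal_sum_of_nonneg fun j _ => mul_nonneg (hπnn i j) (abs_nonneg _)).symm
    rw [hsum_eq, hTt, ← ENNReal.ofReal_mul hC0.le]
    refine ENNReal.ofReal_le_ofReal ?_
    have hptbd : ∀ i ∈ Finset.range (N+1), ∀ j ∈ Finset.range (N+1),
        π i j * |(i:ℝ) - (j:ℝ)| ≤ pos i * (neg j / m) * N := by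
      intro i hi j hj
      by_cases h : i = j
      · subst h
        rw [sub_self, abs_zero, mul_zero]
        exact mul_nonneg (mul_nonneg (hpos0 i) (div_nonneg (hneg0 i) hm.le)) (Nat.cast_nonneg N)
      · have hπij : π i j = pos i * (neg j / m) := by
          rw [hπdef]; dsimp only; rw [if_neg h, zero_add]
        have hiN : (i:ℝ) ≤ N := by
          have := Finset.mem_range.mp hi; exact_mod_cast Nat.lt_succ_iff.mp this
        have hjN : (j:ℝ) ≤ N := by
          have := Finset.mem_range.mp hj; exact_mod_cast Nat.lt_succ_iff.mp this
        have hiz : (0:ℝ) ≤ i := Nat.cast_nonneg i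
        have hjz : (0:ℝ) ≤ j := Nat.cast_nonneg j
        have habs : |(i:ℝ) - (j:ℝ)| ≤ N := abs_le.mpr ⟨by linarith, by linarith⟩
        rw [hπij]
        exact mul_le_mul_of_nonneg_left habs
          (mul_nonneg (hpos0 i) (div_nonneg (hneg0 j) hm.le))
    calc ∑ i ∈ Finset.range (N+1), ∑ j ∈ Finset.range (N+1), π i j * |(i:ℝ) - (j:ℝ)|
        ≤ ∑ i ∈ Finset.range (N+1), ∑ j ∈ Finset.range (N+1), pos i * (neg j / m) * N :=
          Finset.sum_le_sum fun i hi => Finset.sum_le_sum fun j hj => hptbd i hi j hj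
      _ = m * N := by
          have hone : ∀ i : ℕ, ∑ j ∈ Finset.range (N+1), pos i * (neg j / m) * N
              = pos i * N := by
            intro i
            have harr : ∀ j : ℕ, pos i * (neg j / m) * N = (pos i * N / m) * neg j := by
              intro j; ring
            simp only [harr]
            rw [← Finset.mul_sum, hmn, div_mul_cancel₀ _ hm0]
          simp only [hone]
          rw [← Finset.sum_mul, ← hmdef]
      _ ≤ C * t := by
          have h1 : m * N ≤ (((N:ℝ)+1) * (L * t)) * N :=
            mul_le_mul_of_nonneg_right hm_le (Nat.cast_nonneg N)
          have h2 : (((N:ℝ)+1) * (L * t)) * N = C * t := by rw [hC]; ring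
          linarith

end
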